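/- With K = ℝ(t₁,t₂), L = K(u) where ∂₁u = t₂u, ∂₂u = t₁u, and F = K(u³), every F-differential automorphism τ of L satisfies τ(u) = λu with λ³ = 1 and λ ∈ ℝ, hence λ = 1; therefore the group of F-differential automorphisms of L is trivial, even though F ≠ L. -/

import Mathlib

set_option maxHeartbeats 1000000
set_option synthInstance.maxHeartbeats 400000

/-- `K = ℝ(t₁,t₂)`. -/
abbrev RatField2 : Type := FractionRing (MvPolynomial (Fin 2) ℝ)

/-- `L = K(u)`, `u` transcendental over `K`. -/
abbrev ExtField : Type := FractionRing (Polynomial RatField2)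

/-- The inclusion `K → L`. -/
noncomputable def incl : RatField2 →+* ExtField :=
  (algebraMap (Polynomial RatField2) ExtField).comp Polynomial.C

/-- The element `u` of `L`. -/
noncomputable def uElt : ExtField :=
  algebraMap (Polynomial RatField2) ExtField Polynomial.X

/-- The variable `tⱼ` viewed in `L`. -/
noncomputable def tElt (j : Fin 2) : ExtField :=
  incl (algebraMap (MvPolynomial (Fin 2) ℝ) RatField2 (MvPolynomial.X j))

/-! ### Auxiliary: the "no nontrivial solution of `a²+ab+b²=0`" property (formal reality) -/

/-- A commutative ring in which `a²+ab+b² = 0` forces `a = b = 0`. -/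
def NoCube (R : Type*) [CommRing R] : Prop :=
  ∀ a b : R, a ^ 2 + a * b + b ^ 2 = 0 → a = 0 ∧ b = 0

lemma noCube_real : NoCube ℝ := by
  intro a b h
  constructor
  · have h1 : a ^ 2 ≤ 0 := by nlinarith [sq_nonneg (a + b), sq_nonneg b]
    have : a ^ 2 = 0 := le_antisymm h1 (sq_nonneg a)
    exact pow_eq_zero_iff (two_ne_zero) |>.mp this
  · have h1 : b ^ 2 ≤ 0 := by nlinarith [sq_nonneg (a + b), sq_nonneg a]
    have : b ^ 2 = 0 := le_antisymm h1 (sq_nonneg b)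
    exact pow_eq_zero_iff (two_ne_zero) |>.mp this

lemma noCube_of_injective {R S : Type*} [CommRing R] [CommRing S]
    (f : R →+* S) (hf : Function.Injective f) (hS : NoCube S) : NoCube R := by
  intro a b h
  have := hS (f a) (f b) (by
    have := congrArg f h
    push_cast [map_add, map_mul, map_pow] at this
    simpa using this)
  exact ⟨hf (by simpa using this.1), hf (by simpa using this.2)⟩

lemma noCube_poly {R : Type*} [CommRing R] [IsDomain R] (hR : NoCube R) :
    NoCube (Polynomial R) := by
  intro a b h
  by_contra hcon
  have ha : a ≠ 0 := by
    rintro rfl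
    have hb2 : b ^ 2 = 0 := by linear_combination h
    have hb : b = 0 := pow_eq_zero_iff two_ne_zero |>.mp hb2
    exact hcon ⟨rfl, hb⟩
  have hb : b ≠ 0 := by
    rintro rfl
    have ha2 : a ^ 2 = 0 := by linear_combination h
    have ha' : a = 0 := pow_eq_zero_iff two_ne_zero |>.mp ha2
    exact ha ha'
  set n := max a.natDegree b.natDegree with hn
  have han : a.natDegree ≤ n := le_max_left _ _
  have hbn : b.natDegree ≤ n := le_max_right _ _
  have hcoeff : a.coeff n ^ 2 + a.coeff n * b.coeff n + b.coeff n ^ 2 = 0 := by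
    have := congrArg (fun p => Polynomial.coeff p (n + n)) h
    simp only [Polynomial.coeff_add, Polynomial.coeff_zero] at this
    rw [show a ^ 2 = a * a by ring, show b ^ 2 = b * b by ring] at this
    rw [Polynomial.coeff_mul_add_eq_of_natDegree_le han han,
        Polynomial.coeff_mul_add_eq_of_natDegree_le han hbn,
        Polynomial.coeff_mul_add_eq_of_natDegree_le hbn hbn] at this
    linear_combination this
  have := hR _ _ hcoeff
  rcases max_cases a.natDegree b.natDegree with ⟨he, _⟩ | ⟨he, _⟩
  · exact Polynomial.leadingCoeff_ne_zero.mpr ha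
      (by rw [Polynomial.leadingCoeff, ← he]; exact this.1)
  · exact Polynomial.leadingCoeff_ne_zero.mpr hb
      (by rw [Polynomial.leadingCoeff, ← he]; exact this.2)

lemma noCube_fractionRing {R : Type*} [CommRing R] [IsDomain R] (hR : NoCube R) :
    NoCube (FractionRing R) := by
  intro a b h
  obtain ⟨p, s, hs, rfl⟩ := IsFractionRing.div_surjective (A := R) a
  obtain ⟨q, t, ht, rfl⟩ := IsFractionRing.div_surjective (A := R) b
  have hs0 : (algebraMap R (FractionRing R)) s ≠ 0 := by
    simpa [IsFractionRing.to_map_eq_zero_iff] using nonZeroDivisors.ne_zero hs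
  have ht0 : (algebraMap R (FractionRing R)) t ≠ 0 := by
    simpa [IsFractionRing.to_map_eq_zero_iff] using nonZeroDivisors.ne_zero ht
  have key2 : (algebraMap R (FractionRing R)) ((p*t)^2 + (p*t)*(q*s) + (q*s)^2) *
      ((algebraMap R (FractionRing R)) s * (algebraMap R (FractionRing R)) t) = 0 := by
    push_cast [map_add, map_mul, map_pow]
    field_simp at h
    linear_combination ((algebraMap R (FractionRing R)) s * (algebraMap R (FractionRing R)) t) * h
  have key : (algebraMap R (FractionRing R)) ((p*t)^2 + (p*t)*(q*s) + (q*s)^2) = 0 := by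
    rcases mul_eq_zero.mp key2 with h' | h'
    · exact h'
    · rcases mul_eq_zero.mp h' with h'' | h''
      · exact absurd h'' hs0
      · exact absurd h'' ht0
  have h0 := hR (p*t) (q*s) (IsFractionRing.injective R (FractionRing R) (by simpa using key))
  have hp : p = 0 := by
    rcases mul_eq_zero.mp h0.1 with h' | h'
    · exact h'
    · exact absurd h' (nonZeroDivisors.ne_zero ht)
  have hq : q = 0 := by
    rcases mul_eq_zero.mp h0.2 with h' | h'
    · exact h'
    · exact absurd h' (nonZeroDivisors.ne_zero hs)
  subst hp; subst hq
  simp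

lemma noCube_mv : ∀ n : ℕ, NoCube (MvPolynomial (Fin n) ℝ)
  | 0 => noCube_of_injective (MvPolynomial.isEmptyAlgEquiv ℝ (Fin 0)).toRingHom
      (MvPolynomial.isEmptyAlgEquiv ℝ (Fin 0)).injective noCube_real
  | (n+1) => noCube_of_injective (MvPolynomial.finSuccEquiv ℝ n).toRingHom
      (MvPolynomial.finSuccEquiv ℝ n).injective (noCube_poly (noCube_mv n))

lemma noCube_ext : NoCube ExtField :=
  noCube_fractionRing (noCube_poly (noCube_fractionRing (noCube_mv 2)))

/-- In `L`, the only cube root of unity is `1`. -/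
lemma cube_root_one (lam : ExtField) (h : lam ^ 3 = 1) : lam = 1 := by
  have hfac : (lam - 1) * (lam ^ 2 + lam * 1 + 1 ^ 2) = 0 := by linear_combination h
  rcases mul_eq_zero.mp hfac with h' | h'
  · exact sub_eq_zero.mp h'
  · have := (noCube_ext lam 1 h').2
    exact absurd this one_ne_zero

/-! ### Auxiliary: the subfield `K(u³)` -/

/-- Polynomials supported on exponents divisible by 3. -/
def Supp3 (p : Polynomial RatField2) : Prop := ∀ n, p.coeff n ≠ 0 → 3 ∣ n

lemma supp3_mul {p q : Polynomial RatField2} (hp : Supp3 p) (hq : Supp3 q) :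
    Supp3 (p * q) := by
  intro n h
  rw [Polynomial.coeff_mul] at h
  obtain ⟨⟨i, j⟩, hij, hne⟩ := Finset.exists_ne_zero_of_sum_ne_zero h
  have hijn : i + j = n := Finset.HasAntidiagonal.mem_antidiagonal.mp hij
  have hi := hp i (left_ne_zero_of_mul hne)
  have hj := hq j (right_ne_zero_of_mul hne)
  omega

lemma supp3_add {p q : Polynomial RatField2} (hp : Supp3 p) (hq : Supp3 q) :
    Supp3 (p + q) := by
  intro n h
  rw [Polynomial.coeff_add] at h
  by_cases h1 : p.coeff n = 0
  · exact hq n (by rw [h1, zero_add] at h; exact h)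
  · exact hp n h1

lemma supp3_one : Supp3 1 := by
  intro n h
  rw [Polynomial.coeff_one] at h
  split at h
  · omega
  · exact absurd rfl h

noncomputable abbrev ι : Polynomial RatField2 →+* ExtField :=
  algebraMap (Polynomial RatField2) ExtField

lemma ι_ne_zero {q : Polynomial RatField2} (hq : q ≠ 0) : ι q ≠ 0 := by
  simpa [IsFractionRing.to_map_eq_zero_iff] using hq

/-- The subfield `K(u³)` of `L`, described via supports of numerator and denominator. -/
noncomputable def F3 : Subfield ExtField where
  carrier := {x | ∃ p q : Polynomial RatField2, Supp3 p ∧ Supp3 q ∧ q ≠ 0 ∧ x = ι p / ι q}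
  one_mem' := ⟨1, 1, supp3_one, supp3_one, one_ne_zero, by simp⟩
  zero_mem' := ⟨0, 1, by intro n h; simp at h, supp3_one, one_ne_zero, by simp⟩
  mul_mem' := by
    rintro x y ⟨p₁, q₁, hp₁, hq₁, h₁, rfl⟩ ⟨p₂, q₂, hp₂, hq₂, h₂, rfl⟩
    exact ⟨p₁ * p₂, q₁ * q₂, supp3_mul hp₁ hp₂, supp3_mul hq₁ hq₂, mul_ne_zero h₁ h₂, by
      rw [map_mul, map_mul, div_mul_div_comm]⟩
  add_mem' := by
    rintro x y ⟨p₁, q₁, hp₁, hq₁, h₁, rfl⟩ ⟨p₂, q₂, hp₂, hq₂, h₂, rfl⟩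
    refine ⟨p₁ * q₂ + p₂ * q₁, q₁ * q₂, supp3_add (supp3_mul hp₁ hq₂) (supp3_mul hp₂ hq₁),
      supp3_mul hq₁ hq₂, mul_ne_zero h₁ h₂, ?_⟩
    rw [div_add_div _ _ (ι_ne_zero h₁) (ι_ne_zero h₂)]
    push_cast [map_add, map_mul]
    ring_nf
  neg_mem' := by
    rintro x ⟨p, q, hp, hq, h, rfl⟩
    exact ⟨-p, q, fun n hn => hp n (by simpa using hn), hq, h, by rw [map_neg]; ring⟩
  inv_mem' := by
    rintro x ⟨p, q, hp, hq, h, rfl⟩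
    by_cases hp0 : p = 0
    · exact ⟨0, 1, by intro n h'; simp at h', supp3_one, one_ne_zero, by simp [hp0]⟩
    · exact ⟨q, p, hq, hp, hp0, by rw [inv_div]⟩

/-- With `K = ℝ(t₁,t₂)`, `L = K(u)` where `∂₁u = t₂u`, `∂₂u = t₁u`, and `F = K(u³)`,
every `F`-differential automorphism of `L` is the identity, although `F ≠ L`. -/
theorem differential_automorphisms_over_cube_trivial
    (dK : Fin 2 → RatField2 → RatField2)
    (hKadd : ∀ i x y, dK i (x + y) = dK i x + dK i y)
    (hKmul : ∀ i x y, dK i (x * y) = x * dK i y + y * dK i x)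
    (hKvar : ∀ i j : Fin 2,
      dK i (algebraMap (MvPolynomial (Fin 2) ℝ) RatField2 (MvPolynomial.X j)) =
        if i = j then 1 else 0)
    (hKconst : ∀ (i : Fin 2) (r : ℝ),
      dK i (algebraMap (MvPolynomial (Fin 2) ℝ) RatField2 (MvPolynomial.C r)) = 0)
    (D : Fin 2 → ExtField → ExtField)
    (hadd : ∀ i x y, D i (x + y) = D i x + D i y)
    (hmul : ∀ i x y, D i (x * y) = x * D i y + y * D i x)
    (hext : ∀ (i : Fin 2) (x : RatField2), D i (incl x) = incl (dK i x))
    (hu0 : D 0 uElt = tElt 1 * uElt)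
    (hu1 : D 1 uElt = tElt 0 * uElt) :
    (∀ τ : ExtField ≃+* ExtField,
      (∀ x : RatField2, τ (incl x) = incl x) →
      τ (uElt ^ 3) = uElt ^ 3 →
      (∀ (i : Fin 2) (x : ExtField), τ (D i x) = D i (τ x)) →
      τ = RingEquiv.refl ExtField) ∧
    uElt ∉ Subfield.closure (Set.range incl ∪ {uElt ^ 3}) := by
  have hu_ne : uElt ≠ 0 := by
    have : (Polynomial.X : Polynomial RatField2) ≠ 0 := Polynomial.X_ne_zero
    exact ι_ne_zero this
  constructor
  · -- part 1: triviality of the differential Galois group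
    intro τ hK hu3 _hD
    -- τ u = λ u with λ³ = 1, hence λ = 1
    have hτu : τ uElt = uElt := by
      set lam : ExtField := τ uElt / uElt with hlam
      have hlam3 : lam ^ 3 = 1 := by
        rw [hlam, div_pow, ← map_pow, hu3]
        exact div_self (pow_ne_zero 3 hu_ne)
      have := cube_root_one lam hlam3
      rw [hlam, div_eq_one_iff_eq hu_ne] at this
      exact this
    -- τ fixes every polynomial in u
    have hpoly : ∀ p : Polynomial RatField2, τ (ι p) = ι p := by
      intro p
      induction p using Polynomial.induction_on with
      | C a => exact hK a
      | add p q hp hq => rw [map_add, map_add, hp, hq]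
      | monomial n a ih =>
        have : (Polynomial.C a * Polynomial.X ^ (n + 1) : Polynomial RatField2)
            = (Polynomial.C a * Polynomial.X ^ n) * Polynomial.X := by ring
        rw [this, map_mul, map_mul, ih]
        have hX : τ (ι Polynomial.X) = ι Polynomial.X := hτu
        rw [hX]
    -- hence τ fixes all of L
    refine RingEquiv.ext fun x => ?_
    obtain ⟨p, q, hq, rfl⟩ := IsFractionRing.div_surjective (A := Polynomial RatField2) x
    rw [map_div₀, hpoly, hpoly]
    rfl
  · -- part 2: u ∉ K(u³)
    intro hmem
    have hsub : Subfield.closure (Set.range incl ∪ {uElt ^ 3}) ≤ F3 := by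
      apply Subfield.closure_le.mpr
      rintro x (⟨k, rfl⟩ | hx)
      · exact ⟨Polynomial.C k, 1, fun n hn => by
          rw [Polynomial.coeff_C] at hn
          split at hn
          · omega
          · exact absurd rfl hn, supp3_one, one_ne_zero, by simp [incl]⟩
      · rw [Set.mem_singleton_iff] at hx
        subst hx
        refine ⟨Polynomial.X ^ 3, 1, fun n hn => ?_, supp3_one, one_ne_zero, ?_⟩
        · rw [Polynomial.coeff_X_pow] at hn
          split at hn
          · omega
          · exact absurd rfl hn
        · simp [uElt, map_pow]
    obtain ⟨p, q, hp, hq, hq0, heq⟩ := hsub hmem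
    rw [eq_div_iff (ι_ne_zero hq0)] at heq
    have heq' : ι Polynomial.X * ι q = ι p := by
      have : uElt = ι Polynomial.X := rfl
      rw [this] at heq
      exact heq
    have hXq : Polynomial.X * q = p := by
      apply IsFractionRing.injective (Polynomial RatField2) ExtField
      rw [map_mul]
      exact heq'
    obtain ⟨n, hn'⟩ := Polynomial.nonempty_support_iff.mpr hq0
    have hn := Polynomial.mem_support_iff.mp hn'
    have h3n : 3 ∣ n := hq n hn
    have hpn : p.coeff (n + 1) ≠ 0 := by
      rw [← hXq, Polynomial.coeff_X_mul]
      exact hn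
    have h3n1 : 3 ∣ n + 1 := hp (n + 1) hpn
    omega
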